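/- For real constants C, D > 0, set A := C/D and B := 1/(CD) (so that C² = A/B and D² = 1/(AB)). Then the space of J_{C,D}-anti-invariant alternating 2-forms on ℝ⁴ is exactly the 2-dimensional span of B e¹³ − e²⁴ and e¹⁴ + A e²³. -/

import Mathlib

open LinearMap
set_option maxHeartbeats 1000000

noncomputable section

/-- The alternating 2-form `eⁱ ∧ eʲ` on `ℝ⁴`, `e^{ij}(x,y) = xᵢ yⱼ - xⱼ yᵢ`. -/
def eF (i j : Fin 4) : (Fin 4 → ℝ) →ₗ[ℝ] (Fin 4 → ℝ) →ₗ[ℝ] ℝ :=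
  LinearMap.mk₂ ℝ (fun x y => x i * y j - x j * y i)
    (fun x x' y => by simp; ring)
    (fun c x y => by simp; ring)
    (fun x y y' => by simp; ring)
    (fun c x y => by simp; ring)

/-- The linear map `J_{C,D}` on `ℝ⁴`, with `J e₁ = (1/C) e₂`, `J e₂ = -C e₁`,
`J e₃ = (1/D) e₄`, `J e₄ = -D e₃`. -/
def Jcd (C D : ℝ) : (Fin 4 → ℝ) →ₗ[ℝ] (Fin 4 → ℝ) where
  toFun x := ![-C * x 1, C⁻¹ * x 0, -D * x 3, D⁻¹ * x 2]
  map_add' x y := by funext i; fin_cases i <;> simp <;> ring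
  map_smul' c x := by funext i; fin_cases i <;> simp <;> ring

/-- The subspace of `J`-anti-invariant alternating 2-forms on `ℝ⁴`. -/
def antiSub (J : (Fin 4 → ℝ) →ₗ[ℝ] (Fin 4 → ℝ)) :
    Submodule ℝ ((Fin 4 → ℝ) →ₗ[ℝ] (Fin 4 → ℝ) →ₗ[ℝ] ℝ) where
  carrier := {α | (∀ x, α x x = 0) ∧ ∀ x y, α (J x) (J y) = - α x y}
  add_mem' := by
    rintro a b ⟨ha, ha'⟩ ⟨hb, hb'⟩
    refine ⟨fun x => by simp [ha x, hb x], fun x y => by simp [ha' x y, hb' x y]; ring⟩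
  zero_mem' := ⟨fun x => rfl, fun x y => by simp⟩
  smul_mem' := by
    rintro c a ⟨ha, ha'⟩
    exact ⟨fun x => by simp [ha x], fun x y => by simp [ha' x y]⟩

/-- Any bilinear form on `ℝ⁴` is determined by its values on basis vectors. -/
lemma expand4 (α : (Fin 4 → ℝ) →ₗ[ℝ] (Fin 4 → ℝ) →ₗ[ℝ] ℝ) (x y : Fin 4 → ℝ) :
    α x y = ∑ i : Fin 4, ∑ j : Fin 4, x i * y j * α (Pi.single i 1) (Pi.single j 1) := by
  have hx : x = ∑ i : Fin 4, x i • (Pi.single i 1 : Fin 4 → ℝ) := by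
    funext k; simp [Pi.single_apply, Finset.sum_ite_eq]
  have hy : y = ∑ j : Fin 4, y j • (Pi.single j 1 : Fin 4 → ℝ) := by
    funext k; simp [Pi.single_apply, Finset.sum_ite_eq]
  conv_lhs => rw [hx, hy]
  simp [map_sum, Finset.sum_apply, mul_assoc]
  rw [Finset.sum_comm]
  congr 1; funext i; rw [Finset.mul_sum]; congr 1; funext j; ring

/-- For real constants `C, D > 0`, set `A := C/D` and `B := 1/(CD)`
(so that `C² = A/B` and `D² = 1/(AB)`).  Then the space of `J_{C,D}`-anti-invariant
alternating 2-forms on `ℝ⁴` is exactly the 2-dimensional span of `B e¹³ - e²⁴` and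
`e¹⁴ + A e²³`. -/
theorem stmt11 (C D : ℝ) (hC : 0 < C) (hD : 0 < D)
    (A B : ℝ) (hA : A = C / D) (hB : B = 1 / (C * D)) :
    antiSub (Jcd C D) =
      Submodule.span ℝ {B • eF 0 2 - eF 1 3, eF 0 3 + A • eF 1 2} ∧
    Module.finrank ℝ (antiSub (Jcd C D)) = 2 := by
  have hC0 : C ≠ 0 := hC.ne'
  have hD0 : D ≠ 0 := hD.ne'
  have hB0 : B ≠ 0 := by rw [hB]; positivity
  have hmain : antiSub (Jcd C D) =
      Submodule.span ℝ {B • eF 0 2 - eF 1 3, eF 0 3 + A • eF 1 2} := by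
    apply le_antisymm
    · rintro α ⟨h1, h2⟩
      have skew : ∀ x y : Fin 4 → ℝ, α y x = - α x y := by
        intro x y
        have h := h1 (x + y)
        simp [map_add] at h
        have hx := h1 x; have hy := h1 y
        linarith
      -- values of α on basis vectors
      have e01 : α (Pi.single 0 1) (Pi.single 1 1) = 0 := by
        have h := h2 (Pi.single 0 1) (Pi.single 1 1)
        rw [expand4] at h
        simp [Jcd, Pi.single_apply, Fin.sum_univ_four, inv_mul_cancel₀ hC0] at h
        have hs := skew (Pi.single 0 1 : Fin 4 → ℝ) (Pi.single 1 1)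
        linarith
      have e23 : α (Pi.single 2 1) (Pi.single 3 1) = 0 := by
        have h := h2 (Pi.single 2 1) (Pi.single 3 1)
        rw [expand4] at h
        simp [Jcd, Pi.single_apply, Fin.sum_univ_four, inv_mul_cancel₀ hD0] at h
        have hs := skew (Pi.single 2 1 : Fin 4 → ℝ) (Pi.single 3 1)
        linarith
      have e13 : α (Pi.single 1 1) (Pi.single 3 1) =
          -(C * D) * α (Pi.single 0 1) (Pi.single 2 1) := by
        have h := h2 (Pi.single 0 1) (Pi.single 2 1)
        rw [expand4] at h
        simp [Jcd, Pi.single_apply, Fin.sum_univ_four] at h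
        field_simp at h
        linarith
      have e12 : α (Pi.single 1 1) (Pi.single 2 1) =
          (C / D) * α (Pi.single 0 1) (Pi.single 3 1) := by
        have h := h2 (Pi.single 0 1) (Pi.single 3 1)
        rw [expand4] at h
        simp [Jcd, Pi.single_apply, Fin.sum_univ_four] at h
        field_simp at h
        field_simp
        linarith
      have key : α = (C * D * α (Pi.single 0 1) (Pi.single 2 1)) •
            (B • eF 0 2 - eF 1 3) +
          (α (Pi.single 0 1) (Pi.single 3 1)) • (eF 0 3 + A • eF 1 2) := by
        apply LinearMap.ext; intro x; apply LinearMap.ext; intro y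
        rw [expand4 α x y]
        simp only [Fin.sum_univ_four]
        rw [skew (Pi.single 0 1) (Pi.single 1 1),
          skew (Pi.single 0 1) (Pi.single 2 1),
          skew (Pi.single 0 1) (Pi.single 3 1),
          skew (Pi.single 1 1) (Pi.single 2 1),
          skew (Pi.single 1 1) (Pi.single 3 1),
          skew (Pi.single 2 1) (Pi.single 3 1),
          h1 (Pi.single 0 1), h1 (Pi.single 1 1), h1 (Pi.single 2 1), h1 (Pi.single 3 1),
          e01, e23, e13, e12]
        simp [eF, hA, hB]
        field_simp
        ring
      rw [key]
      exact Submodule.add_mem _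
        (Submodule.smul_mem _ _ (Submodule.subset_span (by simp)))
        (Submodule.smul_mem _ _ (Submodule.subset_span (by simp)))
    · rw [Submodule.span_le]
      rintro g (rfl | rfl)
      · refine ⟨fun x => by simp [eF]; ring, fun x y => ?_⟩
        simp [eF, Jcd, hB]
        field_simp
      · refine ⟨fun x => by simp [eF]; ring, fun x y => ?_⟩
        simp [eF, Jcd, hA]
        field_simp
        ring
  refine ⟨hmain, ?_⟩
  have hrange : ({B • eF 0 2 - eF 1 3, eF 0 3 + A • eF 1 2} :
      Set ((Fin 4 → ℝ) →ₗ[ℝ] (Fin 4 → ℝ) →ₗ[ℝ] ℝ)) =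
      Set.range ![B • eF 0 2 - eF 1 3, eF 0 3 + A • eF 1 2] := by
    ext u
    constructor
    · rintro (rfl | rfl)
      exacts [⟨0, rfl⟩, ⟨1, rfl⟩]
    · rintro ⟨i, rfl⟩
      fin_cases i <;> simp
  have hind : LinearIndependent ℝ ![B • eF 0 2 - eF 1 3, eF 0 3 + A • eF 1 2] := by
    refine (LinearIndependent.pair_iff (R := ℝ) (x := B • eF 0 2 - eF 1 3) (y := eF 0 3 + A • eF 1 2)).mpr ?_
    intro s t hst
    have h02 : (s • (B • eF 0 2 - eF 1 3) + t • (eF 0 3 + A • eF 1 2))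
        (Pi.single 0 1 : Fin 4 → ℝ) (Pi.single 2 1) = 0 := by rw [hst]; simp
    have h03 : (s • (B • eF 0 2 - eF 1 3) + t • (eF 0 3 + A • eF 1 2))
        (Pi.single 0 1 : Fin 4 → ℝ) (Pi.single 3 1) = 0 := by rw [hst]; simp
    simp [eF, Pi.single_apply] at h02 h03
    constructor
    · rcases h02 with h | h
      · exact h
      · exact absurd h hB0
    · exact h03
  rw [hmain, hrange, finrank_span_eq_card hind]
  simp
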